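/- For the DFA A' constructed from a monotone circuit g_1,…,g_n: if state ⊤ is not reachable from state n in A' (i.e., there is no word w ∈ Σ* with δ(n,w) = ⊤), then the language L(A') is finite. -/

import Mathlib

/-- The type of a gate in a monotone circuit with `n + 1` gates: a `0`-gate, a
`1`-gate, an `∧`-gate with children `l, r`, or an `∨`-gate with children `l, r`. -/
inductive Gate (n : ℕ) where
  | zero : Gate n
  | one : Gate n
  | and (l r : Fin (n + 1)) : Gate n
  | or (l r : Fin (n + 1)) : Gate n

/-- A monotone circuit with gates `g_0, …, g_n`, where the children of each
`∧`- or `∨`-gate have strictly smaller indices. -/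
structure Circuit (n : ℕ) where
  gate : Fin (n + 1) → Gate n
  and_lt : ∀ i l r, gate i = Gate.and l r → l < i ∧ r < i
  or_lt : ∀ i l r, gate i = Gate.or l r → l < i ∧ r < i

set_option linter.unusedVariables false in
/-- The value of gate `i`: `0`-gates are false, `1`-gates are true, `∧`-gates and
`∨`-gates take the conjunction resp. disjunction of their children's values. -/
def Circuit.val {n : ℕ} (c : Circuit n) (i : Fin (n + 1)) : Bool :=
  match h : c.gate i with
  | Gate.zero => false
  | Gate.one => true
  | Gate.and l r =>
      have hlt := c.and_lt i l r h;
      c.val l && c.val r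
  | Gate.or l r =>
      have hlt := c.or_lt i l r h
      c.val l || c.val r
termination_by (i : ℕ)
decreasing_by
  · exact hlt.1
  · exact hlt.2
  · exact hlt.1
  · exact hlt.2

/-- The alphabet `Σ = {x, y} ∪ {aᵢ, bᵢ : 0 ≤ i ≤ n}`. -/
inductive Alpha (n : ℕ) where
  | x : Alpha n
  | y : Alpha n
  | a (i : Fin (n + 1)) : Alpha n
  | b (i : Fin (n + 1)) : Alpha n
deriving DecidableEq

/-- The states of the DFA `A'`: the initial state `s`, the accepting states
`⊥` (bot) and `⊤` (top), a state for each gate, and a non-accepting sink. -/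
inductive StA (n : ℕ) where
  | s : StA n
  | bot : StA n
  | top : StA n
  | g (i : Fin (n + 1)) : StA n
  | sink : StA n
deriving DecidableEq

/-- The DFA `A'` constructed from the monotone circuit `c`. -/
def dfaA {n : ℕ} (c : Circuit n) : DFA (Alpha n) (StA n) where
  step := fun p ch =>
    match p, ch with
    | StA.s, Alpha.x => StA.g (Fin.last n)
    | StA.top, Alpha.y => StA.s
    | StA.g i, Alpha.a j =>
        if j = i then
          match c.gate i with
          | Gate.zero => StA.bot
          | Gate.one => StA.top
          | Gate.and l _ => StA.g l
          | Gate.or l _ => StA.g l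
        else StA.sink
    | StA.g i, Alpha.b j =>
        if j = i then
          match c.gate i with
          | Gate.zero => StA.bot
          | Gate.one => StA.top
          | Gate.and _ r => StA.g r
          | Gate.or _ r => StA.g r
        else StA.sink
    | _, _ => StA.sink
  start := StA.s
  accept := {StA.bot, StA.top}

/-- The states of the DFA `B`: the initial and accepting state `q`, a state `t`,
a state for each gate (only the `∧`-gate states are used), and a sink. -/
inductive StB (n : ℕ) where
  | q : StB n
  | t : StB n
  | g (i : Fin (n + 1)) : StB n
  | sink : StB n
deriving DecidableEq

/-- The DFA `B` constructed from the monotone circuit `c`. -/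
def dfaB {n : ℕ} (c : Circuit n) : DFA (Alpha n) (StB n) where
  step := fun p ch =>
    match p, ch with
    | StB.q, Alpha.x => StB.t
    | StB.t, Alpha.y => StB.q
    | StB.t, Alpha.a i =>
        match c.gate i with
        | Gate.and _ _ => StB.g i
        | Gate.or _ _ => StB.t
        | Gate.one => StB.t
        | Gate.zero => StB.sink
    | StB.t, Alpha.b i =>
        match c.gate i with
        | Gate.or _ _ => StB.t
        | Gate.one => StB.t
        | _ => StB.sink
    | StB.g i, Alpha.b j =>
        if j = i then
          match c.gate i with
          | Gate.and _ _ => StB.t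
          | _ => StB.sink
        else StB.sink
    | _, _ => StB.sink
  start := StB.q
  accept := {StB.q}


instance {n : ℕ} : Finite (Alpha n) := by
  have hinj : Function.Injective (fun ch : Alpha n =>
      (match ch with
       | .x => Sum.inl true
       | .y => Sum.inl false
       | .a i => Sum.inr (Sum.inl i)
       | .b i => Sum.inr (Sum.inr i) : Bool ⊕ (Fin (n + 1) ⊕ Fin (n + 1)))) := by
    intro u v huv
    cases u <;> cases v <;> simp_all
  exact Finite.of_injective _ hinj

lemma evalFrom_cons' {n : ℕ} (c : Circuit n) (p : StA n) (ch : Alpha n)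
    (w : List (Alpha n)) :
    (dfaA c).evalFrom p (ch :: w) = (dfaA c).evalFrom ((dfaA c).step p ch) w := rfl

lemma evalFrom_sink' {n : ℕ} (c : Circuit n) (w : List (Alpha n)) :
    (dfaA c).evalFrom StA.sink w = StA.sink := by
  induction w with
  | nil => rfl
  | cons ch w ih =>
    rw [evalFrom_cons']
    have : (dfaA c).step StA.sink ch = StA.sink := by cases ch <;> rfl
    rw [this, ih]

lemma bot_bound {n : ℕ} (c : Circuit n) :
    ∀ (w : List (Alpha n)) (i : Fin (n + 1)),
      (∀ u, (dfaA c).evalFrom (StA.g i) u ≠ StA.top) →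
      (dfaA c).evalFrom (StA.g i) w = StA.bot → w.length ≤ (i : ℕ) + 1 := by
  intro w
  induction w with
  | nil => intro i _ hb; simp [DFA.evalFrom] at hb
  | cons ch w ih =>
    intro i htop hb
    rw [evalFrom_cons'] at hb
    cases ch with
    | x =>
      rw [show (dfaA c).step (StA.g i) Alpha.x = StA.sink from rfl,
        evalFrom_sink'] at hb
      exact absurd hb (by simp)
    | y =>
      rw [show (dfaA c).step (StA.g i) Alpha.y = StA.sink from rfl,
        evalFrom_sink'] at hb
      exact absurd hb (by simp)
    | a j =>
      by_cases hji : j = i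
      · subst hji
        rcases hgate : c.gate j with _ | _ | ⟨l, r⟩ | ⟨l, r⟩
        · have hstep : (dfaA c).step (StA.g j) (Alpha.a j) = StA.bot := by
            simp [dfaA, hgate]
          rw [hstep] at hb
          cases w with
          | nil => simp
          | cons ch' w' =>
            rw [evalFrom_cons',
              show (dfaA c).step StA.bot ch' = StA.sink from by cases ch' <;> rfl,
              evalFrom_sink'] at hb
            exact absurd hb (by simp)
        · have hstep : (dfaA c).step (StA.g j) (Alpha.a j) = StA.top := by
            simp [dfaA, hgate]
          exact absurd (show (dfaA c).evalFrom (StA.g j) [Alpha.a j] = StA.top by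
            rw [evalFrom_cons', hstep]; rfl) (htop [Alpha.a j])
        · have hstep : (dfaA c).step (StA.g j) (Alpha.a j) = StA.g l := by
            simp [dfaA, hgate]
          rw [hstep] at hb
          have hlt : (l : ℕ) < (j : ℕ) := (c.and_lt j l r hgate).1
          have htop' : ∀ u, (dfaA c).evalFrom (StA.g l) u ≠ StA.top := by
            intro u hu
            apply htop (Alpha.a j :: u)
            rw [evalFrom_cons', hstep]; exact hu
          have := ih l htop' hb
          simp only [List.length_cons]
          omega
        · have hstep : (dfaA c).step (StA.g j) (Alpha.a j) = StA.g l := by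
            simp [dfaA, hgate]
          rw [hstep] at hb
          have hlt : (l : ℕ) < (j : ℕ) := (c.or_lt j l r hgate).1
          have htop' : ∀ u, (dfaA c).evalFrom (StA.g l) u ≠ StA.top := by
            intro u hu
            apply htop (Alpha.a j :: u)
            rw [evalFrom_cons', hstep]; exact hu
          have := ih l htop' hb
          simp only [List.length_cons]
          omega
      · rw [show (dfaA c).step (StA.g i) (Alpha.a j) = StA.sink from by
            simp [dfaA, hji], evalFrom_sink'] at hb
        exact absurd hb (by simp)
    | b j =>
      by_cases hji : j = i
      · subst hji
        rcases hgate : c.gate j with _ | _ | ⟨l, r⟩ | ⟨l, r⟩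
        · have hstep : (dfaA c).step (StA.g j) (Alpha.b j) = StA.bot := by
            simp [dfaA, hgate]
          rw [hstep] at hb
          cases w with
          | nil => simp
          | cons ch' w' =>
            rw [evalFrom_cons',
              show (dfaA c).step StA.bot ch' = StA.sink from by cases ch' <;> rfl,
              evalFrom_sink'] at hb
            exact absurd hb (by simp)
        · have hstep : (dfaA c).step (StA.g j) (Alpha.b j) = StA.top := by
            simp [dfaA, hgate]
          exact absurd (show (dfaA c).evalFrom (StA.g j) [Alpha.b j] = StA.top by
            rw [evalFrom_cons', hstep]; rfl) (htop [Alpha.b j])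
        · have hstep : (dfaA c).step (StA.g j) (Alpha.b j) = StA.g r := by
            simp [dfaA, hgate]
          rw [hstep] at hb
          have hlt : (r : ℕ) < (j : ℕ) := (c.and_lt j l r hgate).2
          have htop' : ∀ u, (dfaA c).evalFrom (StA.g r) u ≠ StA.top := by
            intro u hu
            apply htop (Alpha.b j :: u)
            rw [evalFrom_cons', hstep]; exact hu
          have := ih r htop' hb
          simp only [List.length_cons]
          omega
        · have hstep : (dfaA c).step (StA.g j) (Alpha.b j) = StA.g r := by
            simp [dfaA, hgate]
          rw [hstep] at hb
          have hlt : (r : ℕ) < (j : ℕ) := (c.or_lt j l r hgate).2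
          have htop' : ∀ u, (dfaA c).evalFrom (StA.g r) u ≠ StA.top := by
            intro u hu
            apply htop (Alpha.b j :: u)
            rw [evalFrom_cons', hstep]; exact hu
          have := ih r htop' hb
          simp only [List.length_cons]
          omega
      · rw [show (dfaA c).step (StA.g i) (Alpha.b j) = StA.sink from by
            simp [dfaA, hji], evalFrom_sink'] at hb
        exact absurd hb (by simp)

/-- If the state `⊤` is not reachable from the state of the output gate in `A'`,
then the language `L(A')` is finite. -/
theorem stmt13 {n : ℕ} (c : Circuit n)
    (h : ¬ ∃ w : List (Alpha n), (dfaA c).evalFrom (StA.g (Fin.last n)) w = StA.top) :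
    Set.Finite {w : List (Alpha n) | w ∈ (dfaA c).accepts} := by
  push_neg at h
  apply Set.Finite.subset (List.finite_length_le (Alpha n) (n + 2))
  intro w hw
  simp only [Set.mem_setOf_eq, DFA.mem_accepts] at hw
  have hacc : (dfaA c).evalFrom StA.s w = StA.bot ∨
      (dfaA c).evalFrom StA.s w = StA.top := by
    have hw' := hw
    simp [dfaA, Set.mem_insert_iff] at hw'
    exact hw'
  cases w with
  | nil =>
    rcases hacc with hb | hb <;> exact absurd hb (by simp [DFA.evalFrom])
  | cons ch w' =>
    cases ch with
    | x =>
      rw [evalFrom_cons', show (dfaA c).step StA.s Alpha.x = StA.g (Fin.last n)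
        from rfl] at hacc
      rcases hacc with hb | hb
      · have := bot_bound c w' (Fin.last n) h hb
        simp only [Set.mem_setOf_eq, List.length_cons]
        have : (Fin.last n : ℕ) = n := rfl
        omega
      · exact absurd hb (h w')
    | y =>
      rw [evalFrom_cons', show (dfaA c).step StA.s Alpha.y = StA.sink from rfl,
        evalFrom_sink' c w'] at hacc
      rcases hacc with hb | hb <;> exact absurd hb (by simp)
    | a j =>
      rw [evalFrom_cons', show (dfaA c).step StA.s (Alpha.a j) = StA.sink from rfl,
        evalFrom_sink' c w'] at hacc
      rcases hacc with hb | hb <;> exact absurd hb (by simp)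
    | b j =>
      rw [evalFrom_cons', show (dfaA c).step StA.s (Alpha.b j) = StA.sink from rfl,
        evalFrom_sink' c w'] at hacc
      rcases hacc with hb | hb <;> exact absurd hb (by simp)
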